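/- Assume the u_j are pairwise distinct. Then for every integer k ≥ 1 and every probability measure ν on [0,1], sup_{x ∈ [0,1]} | ν({ y : y ≺ x }) − ν({ y : φ_k(y) < φ_k(x) }) | ≤ Δ_k + sup_J | Leb(J) − ν(J) |, where the last supremum is over all intervals J ⊆ [0,1]. -/
import Mathlib


open MeasureTheory

/-- `I(x,y) = (min(x,y), max(x,y)]`. -/
def gapInterval (x y : ℝ) : Set ℝ := Set.Ioc (min x y) (max x y)

/-- `i(x,y) = inf { j ≥ 1 : u_j ∈ I(x,y) } ∈ ℕ ∪ {∞}` (with `inf ∅ = ∞`). -/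
noncomputable def firstIdx (u : ℕ → ℝ) (x y : ℝ) : ℕ∞ :=
  sInf ((fun j : ℕ => (j : ℕ∞)) '' {j : ℕ | 1 ≤ j ∧ u j ∈ gapInterval x y})

/-- `x ≺ y` iff `i(x,y) < ∞` and `(y − x) · s_{i(x,y)} > 0`. -/
def Prec (u s : ℕ → ℝ) (x y : ℝ) : Prop :=
  ∃ j : ℕ, firstIdx u x y = (j : ℕ∞) ∧ (y - x) * s j > 0

/-- `φ_k(x) = Leb({ y ∈ [0,1] : y ≺ x and i(x,y) ≤ k })`. -/
noncomputable def phiK (u s : ℕ → ℝ) (k : ℕ) (x : ℝ) : ℝ :=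
  (volume {y : ℝ | y ∈ Set.Icc (0:ℝ) 1 ∧ Prec u s y x ∧ firstIdx u x y ≤ (k : ℕ∞)}).toReal

/-- The maximal gap `Δ_k` of the points `{u_1, …, u_k}` in `[0,1]`. -/
noncomputable def maxGap (u : ℕ → ℝ) (k : ℕ) : ℝ :=
  sSup {d : ℝ | ∃ a b : ℝ, 0 ≤ a ∧ a ≤ b ∧ b ≤ 1 ∧
    (∀ j, 1 ≤ j → j ≤ k → u j ∉ Set.Ioo a b) ∧ d = b - a}

lemma gap_comm (x y : ℝ) : gapInterval x y = gapInterval y x := by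
  simp [gapInterval, min_comm, max_comm]

lemma mem_gap {x y t : ℝ} :
    t ∈ gapInterval x y ↔ (x < t ∧ t ≤ y) ∨ (y < t ∧ t ≤ x) := by
  rcases le_total x y with h | h
  · rw [gapInterval, min_eq_left h, max_eq_right h, Set.mem_Ioc]
    constructor
    · exact fun h' => Or.inl h'
    · rintro (h' | ⟨h1, h2⟩)
      · exact h'
      · constructor <;> linarith
  · rw [gapInterval, min_eq_right h, max_eq_left h, Set.mem_Ioc]
    constructor
    · exact fun h' => Or.inr h'
    · rintro (⟨h1, h2⟩ | h')
      · constructor <;> linarith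
      · exact h'

lemma gap_subset (a b c : ℝ) : gapInterval a c ⊆ gapInterval a b ∪ gapInterval b c := by
  intro t ht
  rw [mem_gap] at ht
  simp only [Set.mem_union, mem_gap]
  rcases le_or_gt t b with h | h <;> rcases ht with ⟨h1, h2⟩ | ⟨h1, h2⟩ <;> tauto


lemma firstIdx_comm (u : ℕ → ℝ) (x y : ℝ) : firstIdx u x y = firstIdx u y x := by
  rw [firstIdx, firstIdx, gap_comm]

lemma firstIdx_spec {u : ℕ → ℝ} {x y : ℝ} {j : ℕ} (h : firstIdx u x y = (j : ℕ∞)) :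
    1 ≤ j ∧ u j ∈ gapInterval x y ∧ ∀ m, 1 ≤ m → u m ∈ gapInterval x y → j ≤ m := by
  classical
  set T : Set ℕ := {j : ℕ | 1 ≤ j ∧ u j ∈ gapInterval x y} with hT
  have hne : T.Nonempty := by
    by_contra hemp
    rw [Set.not_nonempty_iff_eq_empty] at hemp
    rw [firstIdx, ← hT, hemp] at h
    simp at h
  have hmem : sInf T ∈ T := Nat.sInf_mem hne
  have heq : firstIdx u x y = ((sInf T : ℕ) : ℕ∞) := by
    rw [firstIdx, ← hT]
    apply le_antisymm
    · exact sInf_le ⟨sInf T, hmem, rfl⟩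
    · apply le_sInf
      rintro b ⟨m, hm, rfl⟩
      simp only []; exact_mod_cast Nat.sInf_le hm
  have hj : j = sInf T := by
    rw [h] at heq
    exact_mod_cast heq
  subst hj
  exact ⟨hmem.1, hmem.2, fun m h1 h2 => Nat.sInf_le ⟨h1, h2⟩⟩

lemma firstIdx_eq {u : ℕ → ℝ} {x y : ℝ} {j : ℕ} (h1 : 1 ≤ j) (h2 : u j ∈ gapInterval x y)
    (h3 : ∀ m, 1 ≤ m → u m ∈ gapInterval x y → j ≤ m) : firstIdx u x y = (j : ℕ∞) := by
  rw [firstIdx]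
  apply le_antisymm
  · exact sInf_le ⟨j, ⟨h1, h2⟩, rfl⟩
  · apply le_sInf
    rintro b ⟨m, hm, rfl⟩
    simp only []; exact_mod_cast h3 m hm.1 hm.2

/-- `pk u s k y x` : `y ≺ x` with first index `≤ k`. -/
def pk (u s : ℕ → ℝ) (k : ℕ) (y x : ℝ) : Prop :=
  ∃ j : ℕ, 1 ≤ j ∧ j ≤ k ∧ u j ∈ gapInterval y x ∧
    (∀ m, 1 ≤ m → u m ∈ gapInterval y x → j ≤ m) ∧ (x - y) * s j > 0

/-- `eqk x y` : no `u_j`, `1 ≤ j ≤ k`, lies between `x` and `y`. -/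
def eqk (u : ℕ → ℝ) (k : ℕ) (x y : ℝ) : Prop :=
  ∀ m, 1 ≤ m → m ≤ k → u m ∉ gapInterval x y

lemma eqk_symm {u k} {x y : ℝ} (h : eqk u k x y) : eqk u k y x := by
  intro m h1 h2
  rw [gap_comm]; exact h m h1 h2

lemma pk_iff {u s : ℕ → ℝ} {k : ℕ} {y x : ℝ} :
    (Prec u s y x ∧ firstIdx u x y ≤ (k : ℕ∞)) ↔ pk u s k y x := by
  constructor
  · rintro ⟨⟨j, hj, hsign⟩, hle⟩
    obtain ⟨h1, h2, h3⟩ := firstIdx_spec hj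
    refine ⟨j, h1, ?_, h2, h3, hsign⟩
    rw [firstIdx_comm u x y, hj] at hle
    exact_mod_cast hle
  · rintro ⟨j, h1, hk, h2, h3, hsign⟩
    have hfi : firstIdx u y x = (j : ℕ∞) := firstIdx_eq h1 h2 h3
    refine ⟨⟨j, hfi, hsign⟩, ?_⟩
    rw [firstIdx_comm u x y, hfi]
    exact_mod_cast hk

lemma pk_prec {u s : ℕ → ℝ} {k : ℕ} {y x : ℝ} (h : pk u s k y x) : Prec u s y x :=
  (pk_iff.mpr h).1

lemma pk_not_eqk {u s k} {y x : ℝ} (h : pk u s k y x) : ¬ eqk u k y x := by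
  obtain ⟨j, h1, h2, h3, _, _⟩ := h
  exact fun he => he j h1 h2 h3

lemma pk_trichot (u s : ℕ → ℝ) (hs : ∀ j, 1 ≤ j → s j = 1 ∨ s j = -1) (k : ℕ) (x y : ℝ) :
    pk u s k y x ∨ pk u s k x y ∨ eqk u k y x := by
  classical
  by_cases hev : ∃ m, 1 ≤ m ∧ m ≤ k ∧ u m ∈ gapInterval y x
  · set T : Set ℕ := {m | 1 ≤ m ∧ m ≤ k ∧ u m ∈ gapInterval y x} with hT
    have hne : T.Nonempty := hev
    obtain ⟨h1, h2, h3⟩ := Nat.sInf_mem hne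
    set j := sInf T
    have hmin : ∀ m, 1 ≤ m → u m ∈ gapInterval y x → j ≤ m := by
      intro m hm1 hm2
      rcases le_or_gt j m with h | h
      · exact h
      · exact Nat.sInf_le ⟨hm1, h.le.trans h2, hm2⟩
    have hxy : y < x ∨ x < y := by
      rcases mem_gap.mp h3 with ⟨ha, hb⟩ | ⟨ha, hb⟩
      · left; linarith
      · right; linarith
    rcases hs j h1 with hsj | hsj
    · rcases hxy with hlt | hlt
      · exact Or.inl ⟨j, h1, h2, h3, hmin, by rw [hsj]; linarith⟩
      · refine Or.inr (Or.inl ⟨j, h1, h2, ?_, ?_, by rw [hsj]; linarith⟩)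
        · rw [gap_comm]; exact h3
        · intro m hm1 hm2; rw [gap_comm] at hm2; exact hmin m hm1 hm2
    · rcases hxy with hlt | hlt
      · refine Or.inr (Or.inl ⟨j, h1, h2, ?_, ?_, by rw [hsj]; linarith⟩)
        · rw [gap_comm]; exact h3
        · intro m hm1 hm2; rw [gap_comm] at hm2; exact hmin m hm1 hm2
      · exact Or.inl ⟨j, h1, h2, h3, hmin, by rw [hsj]; linarith⟩
  · push_neg at hev
    exact Or.inr (Or.inr fun m h1 h2 h3 => hev m h1 h2 h3)

lemma pk_asymm {u s k} {y x : ℝ} (h : pk u s k y x) (h' : pk u s k x y) : False := by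
  obtain ⟨j, h1, h2, h3, h4, h5⟩ := h
  obtain ⟨j', g1, g2, g3, g4, g5⟩ := h'
  rw [gap_comm] at g3 g4
  have e1 : j ≤ j' := h4 j' g1 g3
  have e2 : j' ≤ j := g4 j h1 h3
  have : j = j' := le_antisymm e1 e2
  subst this
  nlinarith

lemma pk_trans {u s k} {z y x : ℝ} (hs : ∀ j, 1 ≤ j → s j = 1 ∨ s j = -1)
    (hzy : pk u s k z y) (hyx : pk u s k y x) : pk u s k z x := by
  obtain ⟨j1, a1, a2, a3, a4, a5⟩ := hzy
  obtain ⟨j2, b1, b2, b3, b4, b5⟩ := hyx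
  rcases lt_trichotomy j1 j2 with hlt | heq | hlt
  · -- j1 < j2 : first index of I(z,x) is j1
    have hnot : u j1 ∉ gapInterval y x := fun hmem => absurd (b4 j1 a1 hmem) (by omega)
    have hmem : u j1 ∈ gapInterval z x := by
      rcases gap_subset z x y a3 with h | h
      · exact h
      · rw [gap_comm] at h; exact absurd h hnot
    refine ⟨j1, a1, a2, hmem, ?_, ?_⟩
    · intro m hm1 hm2
      rcases gap_subset z y x hm2 with h | h
      · exact a4 m hm1 h
      · exact (b4 m hm1 h).trans' (by omega)
    · rcases hs j1 a1 with h | h <;> rw [h] at a5 ⊢ <;>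
        rcases mem_gap.mp a3 with ⟨c1, c2⟩ | ⟨c1, c2⟩ <;>
        rcases mem_gap.mp hmem with ⟨d1, d2⟩ | ⟨d1, d2⟩ <;> nlinarith
  · exfalso
    subst heq
    rcases hs j1 a1 with h | h <;> rw [h] at a5 b5 <;>
      rcases mem_gap.mp a3 with ⟨c1, c2⟩ | ⟨c1, c2⟩ <;>
      rcases mem_gap.mp b3 with ⟨d1, d2⟩ | ⟨d1, d2⟩ <;> nlinarith
  · -- j2 < j1 : first index of I(z,x) is j2
    have hnot : u j2 ∉ gapInterval z y := fun hmem => absurd (a4 j2 b1 hmem) (by omega)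
    have hmem : u j2 ∈ gapInterval z x := by
      rcases gap_subset y z x b3 with h | h
      · rw [gap_comm] at h; exact absurd h hnot
      · exact h
    refine ⟨j2, b1, b2, hmem, ?_, ?_⟩
    · intro m hm1 hm2
      rcases gap_subset z y x hm2 with h | h
      · exact (a4 m hm1 h).trans' (by omega)
      · exact b4 m hm1 h
    · rcases hs j2 b1 with h | h <;> rw [h] at b5 ⊢ <;>
        rcases mem_gap.mp b3 with ⟨c1, c2⟩ | ⟨c1, c2⟩ <;>
        rcases mem_gap.mp hmem with ⟨d1, d2⟩ | ⟨d1, d2⟩ <;> nlinarith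

lemma pk_congr {u s k} {x y z : ℝ} (hs : ∀ j, 1 ≤ j → s j = 1 ∨ s j = -1)
    (h : eqk u k x y) (hp : pk u s k z x) : pk u s k z y := by
  rcases pk_trichot u s hs k y z with h1 | h1 | h1
  · exact h1
  · exfalso
    have hyx := pk_trans hs h1 hp
    obtain ⟨j, g1, g2, g3, _, _⟩ := hyx
    rw [gap_comm] at g3
    exact h j g1 g2 g3
  · exfalso
    apply pk_not_eqk hp
    intro m h1' h2' h3'
    rcases gap_subset z y x h3' with hm | hm
    · exact h1 m h1' h2' hm
    · rw [gap_comm] at hm; exact h m h1' h2' hm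

lemma eqk_pk {u s k} {x y z : ℝ} (hs : ∀ j, 1 ≤ j → s j = 1 ∨ s j = -1)
    (hzy : eqk u k z y) (hyx : pk u s k y x) : pk u s k z x := by
  rcases pk_trichot u s hs k x z with h1 | h1 | h1
  · exact h1
  · exact absurd (eqk_symm hzy) (pk_not_eqk (pk_trans hs hyx h1))
  · exact absurd (eqk_symm hzy) (pk_not_eqk (pk_congr hs (eqk_symm h1) hyx))

lemma phiK_eq (u s : ℕ → ℝ) (k : ℕ) (x : ℝ) :
    phiK u s k x = (volume {y : ℝ | y ∈ Set.Icc (0:ℝ) 1 ∧ pk u s k y x}).toReal := by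
  rw [phiK]
  have hset : {y : ℝ | y ∈ Set.Icc (0:ℝ) 1 ∧ Prec u s y x ∧ firstIdx u x y ≤ (k : ℕ∞)}
      = {y : ℝ | y ∈ Set.Icc (0:ℝ) 1 ∧ pk u s k y x} := by
    ext y
    simp only [Set.mem_setOf_eq, and_congr_right_iff]
    exact fun _ => pk_iff
  rw [hset]

lemma vol_le_one {A : Set ℝ} (h : A ⊆ Set.Icc (0:ℝ) 1) : volume A ≤ 1 := by
  calc volume A ≤ volume (Set.Icc (0:ℝ) 1) := measure_mono h
  _ = 1 := by rw [Real.volume_Icc]; norm_num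

lemma phiK_lt_aux {u s : ℕ → ℝ} {k : ℕ} {x y L : ℝ} {J : Set ℝ}
    (hs : ∀ j, 1 ≤ j → s j = 1 ∨ s j = -1)
    (hJm : MeasurableSet J) (hJv : volume J = ENNReal.ofReal L) (hL : 0 < L)
    (hJ : J ⊆ {z : ℝ | z ∈ Set.Icc (0:ℝ) 1 ∧ eqk u k z y})
    (hp : pk u s k y x) : phiK u s k y < phiK u s k x := by
  set A1 : Set ℝ := {z : ℝ | z ∈ Set.Icc (0:ℝ) 1 ∧ pk u s k z y} with hA1
  set A2 : Set ℝ := {z : ℝ | z ∈ Set.Icc (0:ℝ) 1 ∧ pk u s k z x} with hA2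
  have hsub : A1 ∪ J ⊆ A2 := by
    rintro z (⟨hz1, hz2⟩ | hzJ)
    · exact ⟨hz1, pk_trans hs hz2 hp⟩
    · obtain ⟨hz1, hz2⟩ := hJ hzJ
      exact ⟨hz1, eqk_pk hs hz2 hp⟩
  have hdiff : (A1 ∪ J) \ J = A1 := by
    ext z
    simp only [Set.mem_diff, Set.mem_union]
    constructor
    · rintro ⟨h1 | h1, h2⟩
      · exact h1
      · exact absurd h1 h2
    · intro h1
      exact ⟨Or.inl h1, fun hzJ => pk_not_eqk h1.2 ((hJ hzJ).2)⟩
  have hinter : (A1 ∪ J) ∩ J = J := Set.inter_eq_self_of_subset_right Set.subset_union_right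
  have hadd : volume J + volume A1 = volume (A1 ∪ J) := by
    conv_rhs => rw [← measure_inter_add_diff (A1 ∪ J) hJm]
    rw [hdiff, hinter]
  have hle : volume J + volume A1 ≤ volume A2 := hadd.le.trans (measure_mono hsub)
  have hA1fin : volume A1 ≤ 1 := vol_le_one fun z hz => hz.1
  have hA2fin : volume A2 ≤ 1 := vol_le_one fun z hz => hz.1
  rw [phiK_eq, phiK_eq, ← hA1, ← hA2]
  have h1 : (volume J + volume A1).toReal ≤ (volume A2).toReal := by
    apply ENNReal.toReal_mono (by exact (hA2fin.trans_lt ENNReal.one_lt_top).ne) hle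
  rw [ENNReal.toReal_add (by rw [hJv]; exact ENNReal.ofReal_ne_top)
    (by exact (hA1fin.trans_lt ENNReal.one_lt_top).ne), hJv,
    ENNReal.toReal_ofReal hL.le] at h1
  linarith

lemma phiK_lt {u s : ℕ → ℝ} {k : ℕ}
    (hs : ∀ j, 1 ≤ j → s j = 1 ∨ s j = -1)
    (hu : ∀ j, 1 ≤ j → u j ∈ Set.Ioo (0:ℝ) 1) {x y : ℝ}
    (hy : y ∈ Set.Icc (0:ℝ) 1) (hp : pk u s k y x) :
    phiK u s k y < phiK u s k x := by
  classical
  rcases lt_or_eq_of_le hy.2 with hlt | heq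
  · -- y < 1 : use the interval [y, b)
    set G : Finset ℝ :=
      insert (1:ℝ) (((Finset.Icc 1 k).filter (fun m => y < u m)).image u) with hG
    have hGne : G.Nonempty := ⟨1, Finset.mem_insert_self _ _⟩
    set b := G.min' hGne with hb
    have hyb : y < b := by
      rw [hb, Finset.lt_min'_iff]
      intro c hc
      rcases Finset.mem_insert.mp hc with rfl | hc
      · exact hlt
      · obtain ⟨m, hm, rfl⟩ := Finset.mem_image.mp hc
        exact (Finset.mem_filter.mp hm).2
    have hb1 : b ≤ 1 := Finset.min'_le _ _ (Finset.mem_insert_self _ _)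
    refine phiK_lt_aux (L := b - y) hs measurableSet_Ico Real.volume_Ico (by linarith) ?_ hp
    intro z hz
    obtain ⟨hz1, hz2⟩ := hz
    refine ⟨⟨hy.1.trans hz1, by linarith⟩, ?_⟩
    intro m h1 h2 hmem
    rcases mem_gap.mp hmem with ⟨c1, c2⟩ | ⟨c1, c2⟩
    · linarith
    · have hmG : u m ∈ G := by
        apply Finset.mem_insert_of_mem
        exact Finset.mem_image.mpr ⟨m, Finset.mem_filter.mpr ⟨Finset.mem_Icc.mpr ⟨h1, h2⟩, c1⟩, rfl⟩
      have := Finset.min'_le _ _ hmG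
      linarith
  · -- y = 1 : use the interval (a, 1]
    set G : Finset ℝ :=
      insert (0:ℝ) (((Finset.Icc 1 k)).image u) with hG
    have hGne : G.Nonempty := ⟨0, Finset.mem_insert_self _ _⟩
    set a := G.max' hGne with ha
    have ha1 : a < 1 := by
      rw [ha, Finset.max'_lt_iff]
      intro c hc
      rcases Finset.mem_insert.mp hc with rfl | hc
      · norm_num
      · obtain ⟨m, hm, rfl⟩ := Finset.mem_image.mp hc
        exact (hu m (Finset.mem_Icc.mp hm).1).2
    have ha0 : 0 ≤ a := Finset.le_max' _ _ (Finset.mem_insert_self _ _)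
    refine phiK_lt_aux (L := 1 - a) hs measurableSet_Ioc (by rw [Real.volume_Ioc]) (by linarith) ?_ hp
    intro z hz
    obtain ⟨hz1, hz2⟩ := hz
    refine ⟨⟨by linarith, hz2⟩, ?_⟩
    intro m h1 h2 hmem
    rcases mem_gap.mp hmem with ⟨c1, c2⟩ | ⟨c1, c2⟩
    · have hmG : u m ∈ G := by
        apply Finset.mem_insert_of_mem
        exact Finset.mem_image.mpr ⟨m, Finset.mem_Icc.mpr ⟨h1, h2⟩, rfl⟩
      have := Finset.le_max' _ _ hmG
      linarith
    · have := (hu m h1).2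
      rw [heq] at c1
      linarith

lemma phiK_congr {u s : ℕ → ℝ} {k : ℕ} (hs : ∀ j, 1 ≤ j → s j = 1 ∨ s j = -1)
    {x y : ℝ} (h : eqk u k x y) : phiK u s k x = phiK u s k y := by
  rw [phiK_eq, phiK_eq]
  have : {z : ℝ | z ∈ Set.Icc (0:ℝ) 1 ∧ pk u s k z x}
      = {z : ℝ | z ∈ Set.Icc (0:ℝ) 1 ∧ pk u s k z y} := by
    ext z
    simp only [Set.mem_setOf_eq, and_congr_right_iff]
    exact fun _ => ⟨fun hp => pk_congr hs h hp, fun hp => pk_congr hs (eqk_symm h) hp⟩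
  rw [this]

lemma phi_set_eq {u s : ℕ → ℝ} {k : ℕ} (hs : ∀ j, 1 ≤ j → s j = 1 ∨ s j = -1)
    (hu : ∀ j, 1 ≤ j → u j ∈ Set.Ioo (0:ℝ) 1) {x : ℝ} (hx : x ∈ Set.Icc (0:ℝ) 1) :
    {y : ℝ | y ∈ Set.Icc (0:ℝ) 1 ∧ phiK u s k y < phiK u s k x}
      = {y : ℝ | y ∈ Set.Icc (0:ℝ) 1 ∧ pk u s k y x} := by
  ext y
  simp only [Set.mem_setOf_eq, and_congr_right_iff]
  intro hy
  constructor
  · intro hlt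
    rcases pk_trichot u s hs k x y with h | h | h
    · exact h
    · exact absurd (phiK_lt hs hu hx h) (by linarith)
    · exact absurd (phiK_congr hs (eqk_symm h)).symm (by intro hh; linarith)
  · exact fun hp => phiK_lt hs hu hy hp

lemma gap_mono {z1 w z2 : ℝ} (h1 : z1 ≤ w) (h2 : w ≤ z2) :
    gapInterval z1 w ⊆ gapInterval z1 z2 := by
  intro t ht
  rcases mem_gap.mp ht with ⟨c1, c2⟩ | ⟨c1, c2⟩
  · exact mem_gap.mpr (Or.inl ⟨c1, by linarith⟩)
  · exact mem_gap.mpr (Or.inl ⟨by linarith, by linarith⟩)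

lemma cell_ordConnected (u : ℕ → ℝ) (k : ℕ) (x : ℝ) :
    ({z : ℝ | z ∈ Set.Icc (0:ℝ) 1 ∧ eqk u k z x}).OrdConnected := by
  constructor
  rintro z1 ⟨hz1, he1⟩ z2 ⟨hz2, he2⟩ w ⟨hw1, hw2⟩
  refine ⟨⟨hz1.1.trans hw1, hw2.trans hz2.2⟩, ?_⟩
  intro m h1 h2 hmem
  rw [gap_comm] at hmem
  rcases gap_subset x z1 w hmem with h | h
  · rw [gap_comm] at h
    exact he1 m h1 h2 h
  · have := gap_mono hw1 hw2 h
    rcases gap_subset z1 x z2 this with h' | h'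
    · exact he1 m h1 h2 h'
    · rw [gap_comm] at h'
      exact he2 m h1 h2 h'

lemma cell_bracket (u : ℕ → ℝ) (k : ℕ) (hu : ∀ j, 1 ≤ j → u j ∈ Set.Ioo (0:ℝ) 1)
    {x : ℝ} (hx : x ∈ Set.Icc (0:ℝ) 1) :
    ∃ a b : ℝ, 0 ≤ a ∧ a ≤ b ∧ b ≤ 1 ∧ (∀ j, 1 ≤ j → j ≤ k → u j ∉ Set.Ioo a b) ∧
      {z : ℝ | z ∈ Set.Icc (0:ℝ) 1 ∧ eqk u k z x} ⊆ Set.Icc a b := by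
  classical
  set GA : Finset ℝ := insert (0:ℝ) (((Finset.Icc 1 k).filter (fun m => u m ≤ x)).image u)
    with hGA
  set GB : Finset ℝ := insert (1:ℝ) (((Finset.Icc 1 k).filter (fun m => x < u m)).image u)
    with hGB
  have hGAne : GA.Nonempty := ⟨0, Finset.mem_insert_self _ _⟩
  have hGBne : GB.Nonempty := ⟨1, Finset.mem_insert_self _ _⟩
  set a := GA.max' hGAne with ha
  set b := GB.min' hGBne with hb
  have hax : a ≤ x := by
    apply Finset.max'_le
    intro c hc
    rcases Finset.mem_insert.mp hc with rfl | hc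
    · exact hx.1
    · obtain ⟨m, hm, rfl⟩ := Finset.mem_image.mp hc
      exact (Finset.mem_filter.mp hm).2
  have hxb : x ≤ b := by
    apply Finset.le_min'
    intro c hc
    rcases Finset.mem_insert.mp hc with rfl | hc
    · exact hx.2
    · obtain ⟨m, hm, rfl⟩ := Finset.mem_image.mp hc
      exact ((Finset.mem_filter.mp hm).2).le
  have ha0 : 0 ≤ a := Finset.le_max' _ _ (Finset.mem_insert_self _ _)
  have hb1 : b ≤ 1 := Finset.min'_le _ _ (Finset.mem_insert_self _ _)
  refine ⟨a, b, ha0, hax.trans hxb, hb1, ?_, ?_⟩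
  · intro j h1 h2 hmem
    obtain ⟨hm1, hm2⟩ := hmem
    rcases le_or_gt (u j) x with h | h
    · have : u j ≤ a := Finset.le_max' _ _ (Finset.mem_insert_of_mem
        (Finset.mem_image.mpr ⟨j, Finset.mem_filter.mpr ⟨Finset.mem_Icc.mpr ⟨h1, h2⟩, h⟩, rfl⟩))
      linarith
    · have : b ≤ u j := Finset.min'_le _ _ (Finset.mem_insert_of_mem
        (Finset.mem_image.mpr ⟨j, Finset.mem_filter.mpr ⟨Finset.mem_Icc.mpr ⟨h1, h2⟩, h⟩, rfl⟩))
      linarith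
  · rintro z ⟨hz, he⟩
    constructor
    · by_contra hlt
      push_neg at hlt
      have hmem : a ∈ GA := Finset.max'_mem _ _
      rcases Finset.mem_insert.mp hmem with h0 | h0
      · linarith [hz.1]
      · obtain ⟨m, hm, hum⟩ := Finset.mem_image.mp h0
        obtain ⟨hmk, hmx⟩ := Finset.mem_filter.mp hm
        obtain ⟨hm1, hm2⟩ := Finset.mem_Icc.mp hmk
        exact he m hm1 hm2 (mem_gap.mpr (Or.inl ⟨by linarith, by linarith⟩))
    · by_contra hlt
      push_neg at hlt
      have hmem : b ∈ GB := Finset.min'_mem _ _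
      rcases Finset.mem_insert.mp hmem with h0 | h0
      · linarith [hz.2]
      · obtain ⟨m, hm, hum⟩ := Finset.mem_image.mp h0
        obtain ⟨hmk, hmx⟩ := Finset.mem_filter.mp hm
        obtain ⟨hm1, hm2⟩ := Finset.mem_Icc.mp hmk
        exact he m hm1 hm2 (mem_gap.mpr (Or.inr ⟨by linarith, by linarith⟩))

/-- assume the `u_j` pairwise distinct. For every `k ≥ 1`, every probability
measure `ν` on `[0,1]` and every `x ∈ [0,1]`,
`| ν({y : y ≺ x}) − ν({y : φ_k(y) < φ_k(x)}) | ≤ Δ_k + sup_J | Leb(J) − ν(J) |`,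
where the supremum runs over all intervals `J ⊆ [0,1]`. -/
theorem discretization_estimate
    (u s : ℕ → ℝ)
    (hu : ∀ j, 1 ≤ j → u j ∈ Set.Ioo (0:ℝ) 1)
    (hs : ∀ j, 1 ≤ j → s j = 1 ∨ s j = -1)
    (hdist : ∀ j k, 1 ≤ j → 1 ≤ k → u j = u k → j = k)
    (k : ℕ) (hk : 1 ≤ k)
    (ν : Measure ℝ) [IsProbabilityMeasure ν] (hν : ν (Set.Icc (0:ℝ) 1) = 1)
    (x : ℝ) (hx : x ∈ Set.Icc (0:ℝ) 1) :
    |(ν {y : ℝ | y ∈ Set.Icc (0:ℝ) 1 ∧ Prec u s y x}).toReal -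
      (ν {y : ℝ | y ∈ Set.Icc (0:ℝ) 1 ∧ phiK u s k y < phiK u s k x}).toReal| ≤
    maxGap u k +
      sSup {r : ℝ | ∃ J : Set ℝ, J ⊆ Set.Icc (0:ℝ) 1 ∧ J.OrdConnected ∧
        r = |(volume J).toReal - (ν J).toReal|} := by
  classical
  rw [phi_set_eq hs hu hx]
  set C : Set ℝ := {z : ℝ | z ∈ Set.Icc (0:ℝ) 1 ∧ eqk u k z x} with hC
  set A : Set ℝ := {y : ℝ | y ∈ Set.Icc (0:ℝ) 1 ∧ pk u s k y x} with hA
  set P : Set ℝ := {y : ℝ | y ∈ Set.Icc (0:ℝ) 1 ∧ Prec u s y x} with hP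
  have hAP : A ⊆ P := fun y hy => ⟨hy.1, pk_prec hy.2⟩
  have hPAC : P ⊆ A ∪ C := by
    rintro y ⟨hy, hPrec⟩
    by_cases hpk : pk u s k y x
    · exact Or.inl ⟨hy, hpk⟩
    · refine Or.inr ⟨hy, ?_⟩
      intro m h1 h2 hmem
      obtain ⟨j, hj, hsign⟩ := hPrec
      obtain ⟨g1, g2, g3⟩ := firstIdx_spec hj
      exact hpk ⟨j, g1, (g3 m h1 hmem).trans h2, g2, g3, hsign⟩
  have h1 : ν A ≤ ν P := measure_mono hAP
  have h2 : ν P ≤ ν A + ν C := (measure_mono hPAC).trans (measure_union_le _ _)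
  have hPA : (ν A).toReal ≤ (ν P).toReal :=
    ENNReal.toReal_mono (measure_ne_top ν _) h1
  have hPAC' : (ν P).toReal ≤ (ν A).toReal + (ν C).toReal := by
    have := ENNReal.toReal_mono
      (ENNReal.add_ne_top.mpr ⟨measure_ne_top ν _, measure_ne_top ν _⟩) h2
    rwa [ENNReal.toReal_add (measure_ne_top ν _) (measure_ne_top ν _)] at this
  have hCnn : (0:ℝ) ≤ (ν C).toReal := ENNReal.toReal_nonneg
  have habs : |(ν P).toReal - (ν A).toReal| ≤ (ν C).toReal :=
    abs_le.mpr ⟨by linarith, by linarith⟩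
  obtain ⟨a, b, g0, gab, g1, gnot, gsub⟩ := cell_bracket u k hu hx
  have hvol : (volume C).toReal ≤ b - a := by
    have hv : volume C ≤ ENNReal.ofReal (b - a) := by
      rw [← Real.volume_Icc]; exact measure_mono gsub
    calc (volume C).toReal ≤ (ENNReal.ofReal (b - a)).toReal :=
          ENNReal.toReal_mono ENNReal.ofReal_ne_top hv
      _ = b - a := ENNReal.toReal_ofReal (by linarith)
  have hgap : b - a ≤ maxGap u k := by
    apply le_csSup
    · refine ⟨1, ?_⟩
      rintro d ⟨a', b', h0', hab', h1', -, rfl⟩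
      linarith
    · exact ⟨a, b, g0, gab, g1, gnot, rfl⟩
  have hdisc : |(volume C).toReal - (ν C).toReal| ≤
      sSup {r : ℝ | ∃ J : Set ℝ, J ⊆ Set.Icc (0:ℝ) 1 ∧ J.OrdConnected ∧
        r = |(volume J).toReal - (ν J).toReal|} := by
    apply le_csSup
    · refine ⟨1, ?_⟩
      rintro r ⟨J, hJ1, -, rfl⟩
      have hp : (volume J).toReal ≤ 1 := by
        have := ENNReal.toReal_mono ENNReal.one_ne_top (vol_le_one hJ1)
        rwa [ENNReal.toReal_one] at this
      have hq : (ν J).toReal ≤ 1 := by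
        have := ENNReal.toReal_mono ENNReal.one_ne_top (prob_le_one (μ := ν) (s := J))
        rwa [ENNReal.toReal_one] at this
      have hvnn : (0:ℝ) ≤ (volume J).toReal := ENNReal.toReal_nonneg
      have hnnn : (0:ℝ) ≤ (ν J).toReal := ENNReal.toReal_nonneg
      exact abs_le.mpr ⟨by linarith, by linarith⟩
    · exact ⟨C, fun z hz => hz.1, cell_ordConnected u k x, rfl⟩
  have hnu : (ν C).toReal ≤ (volume C).toReal + |(volume C).toReal - (ν C).toReal| := by
    have := neg_abs_le ((volume C).toReal - (ν C).toReal)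
    linarith
  linarith
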